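/- For positive integers a and b, the set C(a,b) of equivalence classes of nondecreasing maps f: ℤ → ℤ satisfying f(x+a) = f(x) + b for all x, under the equivalence f ∼ g iff there exists k ∈ ℤ with g(x) = f(x) + k·b for all x, is finite. -/

import Mathlib

/-- The set `I(a,b)` of nondecreasing maps `f : ℤ → ℤ` with `f (x + a) = f x + b`. -/
def IntMaps (a b : ℤ) : Type :=
  {f : ℤ → ℤ // Monotone f ∧ ∀ x, f (x + a) = f x + b}

/-- The relation `f ∼ g ↔ ∃ k, ∀ x, g x = f x + k * b`. -/
def IntRel (a b : ℤ) (f g : IntMaps a b) : Prop :=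
  ∃ k : ℤ, ∀ x, g.1 x = f.1 x + k * b

lemma IntMaps.shift {a b : ℤ} (f : IntMaps a b) : ∀ (k x : ℤ), f.1 (x + k * a) = f.1 x + k * b := by
  intro k
  induction k using Int.induction_on with
  | zero => simp
  | succ n ih =>
    intro x
    rw [show x + ((n : ℤ) + 1) * a = (x + n * a) + a by ring, f.2.2, ih]
    ring
  | pred n ih =>
    intro x
    have h1 := ih (x - a)
    have h2 := f.2.2 (x - a)
    rw [show x - a + a = x by ring] at h2
    rw [show x + (-(n : ℤ) - 1) * a = (x - a) + (-(n : ℤ)) * a by ring, h1, h2]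
    ring

/-- Normalized function: subtract the right multiple of `b`. -/
noncomputable def norml {a b : ℤ} (f : IntMaps a b) : ℤ → ℤ :=
  fun x => f.1 x - (f.1 0 / b) * b

/-- For positive `a, b`, the set `C(a,b)` of equivalence classes is finite. -/
theorem stmt0 (a b : ℤ) (ha : 0 < a) (hb : 0 < b) :
    Finite (Quot (IntRel a b)) := by
  have hb0 : b ≠ 0 := hb.ne'
  -- normalized values on [0, a-1] lie in [0, 2b]
  have hmem : ∀ (f : IntMaps a b) (x : ℤ), x ∈ Set.Icc (0:ℤ) (a-1) →
      norml f x ∈ Set.Icc (0:ℤ) (2*b) := by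
    intro f x hx
    obtain ⟨hx0, hx1⟩ := hx
    have h0 : f.1 0 ≤ f.1 x := f.2.1 hx0
    have ha' : f.1 x ≤ f.1 a := f.2.1 (by omega)
    have hfa : f.1 a = f.1 0 + b := by have := f.2.2 0; simpa using this
    have hem : f.1 0 % b = f.1 0 - b * (f.1 0 / b) := Int.emod_def _ _
    have h1 : 0 ≤ f.1 0 % b := Int.emod_nonneg _ hb0
    have h2 : f.1 0 % b < b := Int.emod_lt_of_pos _ hb
    have hc : (f.1 0 / b) * b = b * (f.1 0 / b) := mul_comm _ _
    simp only [norml, Set.mem_Icc]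
    omega
  set Φ : Quot (IntRel a b) → (Set.Icc (0:ℤ) (a-1) → Set.Icc (0:ℤ) (2*b)) :=
    Quot.lift (fun f x => ⟨norml f x.1, hmem f x.1 x.2⟩)
      (by
        intro f g ⟨k, hk⟩
        funext x
        have h0 : g.1 0 / b = f.1 0 / b + k := by
          rw [hk 0, Int.add_mul_ediv_right _ _ hb0]
        simp only [norml, Subtype.mk.injEq, hk x.1, h0]
        ring) with hΦ
  have hinj : Function.Injective Φ := by
    intro q1 q2 h
    obtain ⟨f, rfl⟩ := Quot.exists_rep q1
    obtain ⟨g, rfl⟩ := Quot.exists_rep q2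
    apply Quot.sound
    refine ⟨g.1 0 / b - f.1 0 / b, fun x => ?_⟩
    have key : ∀ y ∈ Set.Icc (0:ℤ) (a-1), norml f y = norml g y := by
      intro y hy
      have := congrFun h ⟨y, hy⟩
      simpa [hΦ] using congrArg Subtype.val this
    have hr : x % a ∈ Set.Icc (0:ℤ) (a-1) :=
      ⟨Int.emod_nonneg _ ha.ne', by have := Int.emod_lt_of_pos x ha; omega⟩
    have hx : x = x % a + (x / a) * a := by
      have h1 := Int.emod_def x a
      have h2 : (x / a) * a = a * (x / a) := mul_comm _ _
      omega
    have hf := f.shift (x / a) (x % a)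
    have hg := g.shift (x / a) (x % a)
    have hkey := key _ hr
    simp only [norml] at hkey
    rw [hx, hf, hg]
    linear_combination -hkey
  exact Finite.of_injective Φ hinj
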